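/- Let R be a ring and let A be a submodule of modules B and C, with A pure in both B and C. Then the canonical map π : B ⊕ C → (B ⊕ C)/{(a, -a) : a ∈ A} is a surjective homomorphism whose kernel {(a,-a) : a ∈ A} is a pure submodule of B ⊕ C; i.e., π is a pure epimorphism. -/
import Mathlib


universe u v

/-- A submodule `A ≤ M` is pure if every finite system of `R`-linear equations with
parameters in `A` that is solvable in `M` is solvable in `A`. -/
def IsPureSubmodule (R : Type u) [Ring R] {M : Type v} [AddCommGroup M] [Module R M]
    (A : Submodule R M) : Prop :=
  ∀ (k n : ℕ) (c : Fin k → Fin n → R) (a : Fin k → M),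
    (∀ i, a i ∈ A) →
    (∃ x : Fin n → M, ∀ i, (∑ j, c i j • x j) = a i) →
    ∃ x : Fin n → M, (∀ j, x j ∈ A) ∧ ∀ i, (∑ j, c i j • x j) = a i

/-- A linear map is a pure embedding if it is injective and its range is a pure submodule. -/
def IsPureEmbedding (R : Type u) [Ring R] {M N : Type v} [AddCommGroup M] [Module R M]
    [AddCommGroup N] [Module R N] (f : M →ₗ[R] N) : Prop :=
  Function.Injective f ∧ IsPureSubmodule R (LinearMap.range f)

/-- A module is pure-injective if it is a direct summand of every module containing it
as a pure submodule, i.e. every pure embedding out of it admits a retraction. -/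
def IsPureInjective (R : Type u) [Ring R] (M : Type v) [AddCommGroup M] [Module R M] : Prop :=
  ∀ (N : Type v) [AddCommGroup N] [Module R N] (f : M →ₗ[R] N),
    IsPureEmbedding R f → ∃ g : N →ₗ[R] M, g ∘ₗ f = LinearMap.id

/-- A module is absolutely pure if it is pure in every module containing it. -/
def IsAbsolutelyPure (R : Type u) [Ring R] (M : Type v) [AddCommGroup M] [Module R M] : Prop :=
  ∀ (N : Type v) [AddCommGroup N] [Module R N] (f : M →ₗ[R] N),
    Function.Injective f → IsPureSubmodule R (LinearMap.range f)

/-- if A is pure in both B and C, then the canonical map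
π : B ⊕ C → (B ⊕ C)/{(a,-a) : a ∈ A} is a pure epimorphism: it is surjective,
its kernel is {(a,-a) : a ∈ A}, and this kernel is pure in B ⊕ C. -/
theorem stmt2 (R : Type u) [Ring R]
    (A B C : Type u) [AddCommGroup A] [Module R A] [AddCommGroup B] [Module R B]
    [AddCommGroup C] [Module R C]
    (iB : A →ₗ[R] B) (iC : A →ₗ[R] C)
    (hB : IsPureEmbedding R iB) (hC : IsPureEmbedding R iC) :
    Function.Surjective (LinearMap.range (iB.prod (-iC))).mkQ ∧
    LinearMap.ker (LinearMap.range (iB.prod (-iC))).mkQ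
      = LinearMap.range (iB.prod (-iC)) ∧
    IsPureSubmodule R (LinearMap.range (iB.prod (-iC))) := by
  obtain ⟨hinj, hpure⟩ := hB
  refine ⟨Submodule.mkQ_surjective _, Submodule.ker_mkQ _, ?_⟩
  rintro k n c a ha ⟨x, hx⟩
  choose t ht using ha
  have h1 : ∃ u : Fin n → B, ∀ i, (∑ j, c i j • u j) = iB (t i) := by
    refine ⟨fun j => (x j).1, fun i => ?_⟩
    have h := congrArg Prod.fst (hx i)
    have h2 := congrArg Prod.fst (ht i)
    simp only [LinearMap.prod_apply, Pi.prod] at h2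
    simpa [Prod.fst_sum] using h.trans h2.symm
  obtain ⟨u, hu, hueq⟩ := hpure k n c (fun i => iB (t i)) (fun i => ⟨t i, rfl⟩) h1
  choose p hp using hu
  have hpt : ∀ i, (∑ j, c i j • p j) = t i := by
    intro i
    apply hinj
    rw [map_sum]
    simp only [map_smul, hp]
    exact hueq i
  refine ⟨fun j => (iB.prod (-iC)) (p j), fun j => ⟨p j, rfl⟩, fun i => ?_⟩
  rw [← ht i, ← hpt i]
  simp [map_sum]
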